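/- Let G be a centered symmetric psd n×n matrix, write G = H + σ_G·V with H orthogonal to V (in the Frobenius inner product), where V = I_n − (1/n)1_n 1_n^T and σ_G = ⟨G,V⟩/‖V‖_F^2. Then ‖L(H)‖^2 ≥ n·‖H‖_F^2, where L(H) = (2H_{ik} − 2H_{ij} + H_{jj} − H_{kk} : (i,j,k) ∈ T) and ‖L(H)‖ is the Euclidean norm of this vector over all triples in T. -/

import Mathlib

open Matrix Finset

/-- The centering matrix `V = I − (1/n)·1·1ᵀ`. -/
noncomputable def centering (n : ℕ) : Matrix (Fin n) (Fin n) ℝ :=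
  1 - (n : ℝ)⁻¹ • Matrix.of (fun _ _ => (1 : ℝ))

/-- `σ_G = ⟨G,V⟩ / ‖V‖_F²` (Frobenius inner product and norm). -/
noncomputable def sigmaG {n : ℕ} (G : Matrix (Fin n) (Fin n) ℝ) : ℝ :=
  (Gᵀ * centering n).trace / (∑ i, ∑ j, (centering n i j) ^ 2)

/-- Restricted-isometry type bound: for a centered symmetric psd matrix `G`, writing
`G = H + σ_G·V` with `H = G − σ_G·V` orthogonal to `V`, we have
`‖L(H)‖² = Σ_{t∈T} (2H_{ik} − 2H_{ij} + H_{jj} − H_{kk})² ≥ n·‖H‖_F²`. -/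

lemma sum_sq_sub' {ι : Type*} (E : Finset ι) (x : ι → ℝ) :
    ∑ j ∈ E, ∑ k ∈ E, (x k - x j)^2
      = 2 * E.card * (∑ k ∈ E, (x k)^2) - 2*(∑ k ∈ E, x k)^2 := by
  have h : ∀ j k : ι, (x k - x j)^2 = (x k)^2 - 2*(x j * x k) + (x j)^2 := by intros; ring
  simp_rw [h, Finset.sum_add_distrib, Finset.sum_sub_distrib, ← Finset.mul_sum, ← Finset.sum_mul,
    Finset.sum_const, nsmul_eq_mul, ← Finset.mul_sum]
  ring

lemma double_count' {n : ℕ} (f : Fin n → Fin n → Fin n → ℝ)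
    (hswap : ∀ i j k, f i j k = f i k j) (hdiag : ∀ i j, f i j j = 0) :
    2 * ∑ t ∈ Finset.univ.filter
        (fun t : Fin n × Fin n × Fin n => t.1 ≠ t.2.1 ∧ t.1 ≠ t.2.2 ∧ t.2.1 < t.2.2),
        f t.1 t.2.1 t.2.2
      = ∑ i, ∑ j, ∑ k, if i ≠ j ∧ i ≠ k then f i j k else 0 := by
  rw [Finset.sum_filter, Fintype.sum_prod_type]
  simp_rw [Fintype.sum_prod_type]
  rw [Finset.mul_sum]
  refine Finset.sum_congr rfl fun i _ => ?_
  have key : ∀ j k : Fin n, (if i ≠ j ∧ i ≠ k then f i j k else 0)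
      = (if i ≠ j ∧ i ≠ k ∧ j < k then f i j k else 0)
        + (if i ≠ j ∧ i ≠ k ∧ k < j then f i j k else 0) := by
    intro j k
    rcases lt_trichotomy j k with h | h | h
    · simp [h, not_lt.mpr h.le, and_assoc]
    · subst h; simp [hdiag, lt_irrefl]
    · simp [h, not_lt.mpr h.le, and_assoc]
  simp_rw [key, Finset.sum_add_distrib]
  have hsw : ∑ j, ∑ k, (if i ≠ j ∧ i ≠ k ∧ k < j then f i j k else 0)
      = ∑ j, ∑ k, (if i ≠ j ∧ i ≠ k ∧ j < k then f i j k else 0) := by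
    rw [Finset.sum_comm]
    refine Finset.sum_congr rfl fun j _ => Finset.sum_congr rfl fun k _ => ?_
    by_cases h1 : i ≠ j ∧ i ≠ k ∧ j < k
    · rw [if_pos ⟨h1.2.1, h1.1, h1.2.2⟩, if_pos h1, hswap]
    · rw [if_neg h1, if_neg (by tauto)]
  rw [hsw]; ring

lemma per_i' {n : ℕ} (H : Matrix (Fin n) (Fin n) ℝ) (i : Fin n)
    (hrow : ∀ i, ∑ j, H i j = 0) (htr : ∑ i, H i i = 0) :
    ∑ j, ∑ k, (if i ≠ j ∧ i ≠ k then ((2*H i k - H k k) - (2*H i j - H j j))^2 else 0)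
      = 2*((n:ℝ)-1)*((∑ k, (2*H i k - H k k)^2) - (H i i)^2) - 2*(H i i)^2 := by
  have hE : ∀ g : Fin n → ℝ, ∑ k, (if i ≠ k then g k else 0) = ∑ k ∈ univ.erase i, g k := by
    intro g
    rw [← Finset.sum_filter]
    congr 1
    simp [Finset.filter_ne]
  have step1 : ∑ j, ∑ k, (if i ≠ j ∧ i ≠ k then ((2*H i k - H k k) - (2*H i j - H j j))^2 else 0)
      = ∑ j ∈ univ.erase i, ∑ k ∈ univ.erase i, ((2*H i k - H k k) - (2*H i j - H j j))^2 := by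
    rw [← hE]
    refine Finset.sum_congr rfl fun j _ => ?_
    by_cases h : i ≠ j
    · rw [if_pos h, ← hE]
      exact Finset.sum_congr rfl fun k _ => by by_cases h2 : i ≠ k <;> simp [h, h2]
    · rw [if_neg h]
      simp [h]
  rw [step1, sum_sq_sub']
  have hcard : ((univ.erase i).card : ℝ) = (n : ℝ) - 1 := by
    rw [Finset.card_erase_of_mem (Finset.mem_univ i)]
    simp
    rw [Nat.cast_sub (by have := i.2; omega)]
    simp
  have h1 : ∑ k ∈ univ.erase i, (2*H i k - H k k) = - H i i := by
    rw [Finset.sum_erase_eq_sub (Finset.mem_univ i)]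
    rw [Finset.sum_sub_distrib, ← Finset.mul_sum, hrow, htr]
    ring
  have h2 : ∑ k ∈ univ.erase i, (2*H i k - H k k)^2 = (∑ k, (2*H i k - H k k)^2) - (H i i)^2 := by
    rw [Finset.sum_erase_eq_sub (Finset.mem_univ i)]
    congr 1
    ring
  rw [hcard, h1, h2]
  ring

lemma aux_main {n : ℕ} (hn : 2 ≤ n) (H : Matrix (Fin n) (Fin n) ℝ)
    (hsym : ∀ i j, H i j = H j i)
    (hrow : ∀ i, ∑ j, H i j = 0)
    (htr : ∑ i, H i i = 0) :
    (n : ℝ) * (∑ i, ∑ j, (H i j) ^ 2) ≤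
      ∑ t ∈ Finset.univ.filter
          (fun t : Fin n × Fin n × Fin n => t.1 ≠ t.2.1 ∧ t.1 ≠ t.2.2 ∧ t.2.1 < t.2.2),
        (2 * H t.1 t.2.2 - 2 * H t.1 t.2.1 + H t.2.1 t.2.1 - H t.2.2 t.2.2) ^ 2 := by
  set F := ∑ i, ∑ j, (H i j) ^ 2 with hF
  set D := ∑ i, (H i i) ^ 2 with hD
  have hF0 : 0 ≤ F := by positivity
  have hD0 : 0 ≤ D := by positivity
  set S := ∑ t ∈ Finset.univ.filter
          (fun t : Fin n × Fin n × Fin n => t.1 ≠ t.2.1 ∧ t.1 ≠ t.2.2 ∧ t.2.1 < t.2.2),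
        (2 * H t.1 t.2.2 - 2 * H t.1 t.2.1 + H t.2.1 t.2.1 - H t.2.2 t.2.2) ^ 2 with hS
  -- rewrite summand as f
  have hSf : S = ∑ t ∈ Finset.univ.filter
          (fun t : Fin n × Fin n × Fin n => t.1 ≠ t.2.1 ∧ t.1 ≠ t.2.2 ∧ t.2.1 < t.2.2),
        ((2*H t.1 t.2.2 - H t.2.2 t.2.2) - (2*H t.1 t.2.1 - H t.2.1 t.2.1))^2 :=
    Finset.sum_congr rfl fun t _ => by ring
  have hdc := double_count' (fun i j k => ((2*H i k - H k k) - (2*H i j - H j j))^2)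
    (fun i j k => by ring) (fun i j => by ring)
  have hQ : ∑ i, ∑ k, (2*H i k - H k k)^2 = 4*F + (n:ℝ)*D := by
    have expand : ∑ i, ∑ k, (2*H i k - H k k)^2
        = 4*(∑ i, ∑ k, (H i k)^2) - 4*(∑ i, ∑ k, H i k * H k k) + ∑ i : Fin n, ∑ k, (H k k)^2 := by
      have inner : ∀ i : Fin n, ∑ k, (2*H i k - H k k)^2
          = 4*(∑ k, (H i k)^2) - 4*(∑ k, H i k * H k k) + ∑ k, (H k k)^2 := by
        intro i
        rw [Finset.mul_sum, Finset.mul_sum, ← Finset.sum_sub_distrib, ← Finset.sum_add_distrib]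
        exact Finset.sum_congr rfl fun k _ => by ring
      rw [Finset.sum_congr rfl (fun i _ => inner i), Finset.sum_add_distrib,
        Finset.sum_sub_distrib, ← Finset.mul_sum, ← Finset.mul_sum]
    have e2 : ∑ i : Fin n, ∑ k : Fin n, H i k * H k k = 0 := by
      rw [Finset.sum_comm]
      have e3 : ∀ k : Fin n, ∑ i : Fin n, H i k * H k k = 0 := by
        intro k
        rw [← Finset.sum_mul]
        have : ∑ i : Fin n, H i k = 0 := by
          rw [Finset.sum_congr rfl (fun i _ => hsym i k)]
          exact hrow k
        rw [this, zero_mul]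
      simp [e3]
    rw [expand, e2]
    rw [show (∑ k : Fin n, (H k k)^2) = D from hD.symm]
    rw [Finset.sum_const, Finset.card_univ, Fintype.card_fin, nsmul_eq_mul, ← hF]
    ring
  have key : 2 * S = 8*((n:ℝ)-1)*F + 2*(n:ℝ)*((n:ℝ)-2)*D := by
    rw [hSf, hdc]
    rw [Finset.sum_congr rfl (fun i _ => per_i' H i hrow htr)]
    rw [Finset.sum_sub_distrib, ← Finset.mul_sum, Finset.sum_sub_distrib, hQ,
      ← Finset.mul_sum, ← hD]
    ring
  have hn' : (2:ℝ) ≤ (n:ℝ) := by exact_mod_cast hn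
  have h1 : 0 ≤ (6*(n:ℝ) - 8) * F := mul_nonneg (by linarith) hF0
  have h2 : 0 ≤ 2*(n:ℝ)*((n:ℝ)-2)*D := by
    apply mul_nonneg (mul_nonneg (by linarith) (by linarith)) hD0
  linarith [key, h1, h2]

theorem L_restricted_isometry {n : ℕ} (G : Matrix (Fin n) (Fin n) ℝ)
    (hG : G.PosSemidef) (hcen : G *ᵥ (1 : Fin n → ℝ) = 0) :
    (n : ℝ) * (∑ i, ∑ j, ((G - sigmaG G • centering n) i j) ^ 2) ≤
      ∑ t ∈ Finset.univ.filter
          (fun t : Fin n × Fin n × Fin n => t.1 ≠ t.2.1 ∧ t.1 ≠ t.2.2 ∧ t.2.1 < t.2.2),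
        (2 * (G - sigmaG G • centering n) t.1 t.2.2
          - 2 * (G - sigmaG G • centering n) t.1 t.2.1
          + (G - sigmaG G • centering n) t.2.1 t.2.1
          - (G - sigmaG G • centering n) t.2.2 t.2.2) ^ 2 := by
  have hrowG : ∀ i, ∑ j, G i j = 0 := by
    intro i
    have := congrFun hcen i
    simpa [Matrix.mulVec, dotProduct] using this
  have hGs : ∀ i j, G i j = G j i := by
    intro i j
    have := congrFun (congrFun hG.1 i) j
    simpa [Matrix.conjTranspose_apply] using this.symm
  rcases Nat.lt_or_ge n 2 with h | h
  · interval_cases n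
    · simp
    · have hG00 : G 0 0 = 0 := by
        have := hrowG 0; simpa [Fin.sum_univ_one] using this
      have hLHS : ((1:ℕ) : ℝ) * (∑ i, ∑ j, ((G - sigmaG G • centering 1) i j) ^ 2) = 0 := by
        simp [Fin.sum_univ_one, Matrix.sub_apply, Matrix.smul_apply, centering,
          Matrix.one_apply, hG00]
      rw [hLHS]
      exact Finset.sum_nonneg fun t _ => sq_nonneg _
  · have hn2 : (2:ℝ) ≤ (n:ℝ) := by exact_mod_cast h
    have hn0 : (n : ℝ) ≠ 0 := by linarith
    have hn1 : (n : ℝ) - 1 ≠ 0 := by linarith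
    have hV : ∀ i j : Fin n, centering n i j = (if i = j then 1 else 0) - (n:ℝ)⁻¹ := by
      intro i j
      simp [centering, Matrix.sub_apply, Matrix.one_apply, Matrix.smul_apply]
    have hVs : ∀ i j : Fin n, centering n i j = centering n j i := by
      intro i j
      rw [hV, hV]
      by_cases h' : i = j
      · subst h'; rfl
      · rw [if_neg h', if_neg (Ne.symm h')]
    have hrowV : ∀ i : Fin n, ∑ j, centering n i j = 0 := by
      intro i
      rw [Finset.sum_congr rfl fun j _ => hV i j, Finset.sum_sub_distrib]
      rw [Finset.sum_ite_eq Finset.univ i (fun _ => (1:ℝ))]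
      simp [Finset.card_univ, mul_inv_cancel₀ hn0]
    have hdV : ∑ i : Fin n, centering n i i = (n:ℝ) - 1 := by
      have : ∀ i : Fin n, centering n i i = 1 - (n:ℝ)⁻¹ := fun i => by rw [hV]; simp
      rw [Finset.sum_congr rfl fun i _ => this i, Finset.sum_const, Finset.card_univ,
        Fintype.card_fin, nsmul_eq_mul]
      field_simp
    have hden : ∑ i, ∑ j, (centering n i j)^2 = (n:ℝ) - 1 := by
      have hsq : ∀ i j : Fin n, (centering n i j)^2
          = (if i = j then 1 - 2*(n:ℝ)⁻¹ else 0) + ((n:ℝ)⁻¹)^2 := by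
        intro i j; rw [hV]; by_cases h' : i = j <;> simp [h'] <;> ring
      simp_rw [hsq, Finset.sum_add_distrib, Finset.sum_ite_eq Finset.univ _
        (fun _ => (1 - 2*(n:ℝ)⁻¹)), Finset.mem_univ, if_pos, Finset.sum_const,
        Finset.card_univ, Fintype.card_fin, nsmul_eq_mul]
      field_simp
      ring
    have hnum : (Gᵀ * centering n).trace = ∑ i, G i i := by
      rw [Matrix.trace]
      simp only [Matrix.diag_apply, Matrix.mul_apply, Matrix.transpose_apply]
      have e : ∀ i k : Fin n, G k i * centering n k i
          = (if k = i then G k i else 0) - G k i * (n:ℝ)⁻¹ := by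
        intro i k; rw [hV]; by_cases h' : k = i <;> simp [h'] <;> ring
      simp_rw [e, Finset.sum_sub_distrib]
      have e2 : ∑ i : Fin n, ∑ k : Fin n, (if k = i then G k i else 0) = ∑ i, G i i := by
        refine Finset.sum_congr rfl fun i _ => ?_
        rw [Finset.sum_ite_eq' Finset.univ i (fun k => G k i)]
        simp
      have e3 : ∑ i : Fin n, ∑ k : Fin n, G k i * (n:ℝ)⁻¹ = 0 := by
        rw [Finset.sum_comm]
        have : ∀ k : Fin n, ∑ i : Fin n, G k i * (n:ℝ)⁻¹ = 0 := by
          intro k; rw [← Finset.sum_mul, hrowG, zero_mul]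
        simp [this]
      rw [e2, e3, sub_zero]
    have hσ : sigmaG G = (∑ i, G i i) / ((n:ℝ) - 1) := by
      rw [sigmaG, hnum, hden]
    apply aux_main h
    · intro i j
      simp only [Matrix.sub_apply, Matrix.smul_apply, smul_eq_mul]
      rw [hGs i j, hVs i j]
    · intro i
      simp only [Matrix.sub_apply, Matrix.smul_apply, smul_eq_mul]
      rw [Finset.sum_sub_distrib, hrowG, ← Finset.mul_sum, hrowV]
      ring
    · simp only [Matrix.sub_apply, Matrix.smul_apply, smul_eq_mul]
      rw [Finset.sum_sub_distrib, ← Finset.mul_sum, hdV, hσ]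
      field_simp
      ring
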